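/- arXiv:1707.01568 — 2 statements merged into one kernel-verified Lean document; each statement's English description precedes it below -/
import Mathlib

section
/- Let N_p be a weight sequence satisfying (M.1) and let N be its associated function. Suppose χ is an integrable function on ℝ^d whose Fourier transform χ̂ satisfies |χ̂(t)| ≤ C e^{−2N(2|t|/h)} for all t ∈ ℝ^d for some constants C, h > 0, and define θ_ε(x) = ε^{−d} F^{−1}(ψ)(x/ε) χ(x/r_ε), where ψ is a bounded measurable function with 0 ≤ ψ ≤ 1 supported in B(0,2), and r_ε > 0. Then for every ε and every ξ ∈ ℝ^d with |ξ| ≥ 4/ε, |θ̂_ε(ξ)| ≤ C′ e^{−N(r_ε|ξ|/h)}, where C′ = C (2π)^{−d} ∫_{ℝ^d} e^{−N(2|t|/h)} dt. -/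
open Filter Set MeasureTheory

noncomputable section

abbrev Rd (d : ℕ) := EuclideanSpace ℝ (Fin d)

/-- Fourier transform with convention `F(φ)(ξ) = ∫ φ(x) e^{-i x·ξ} dx`. -/
def FT {d : ℕ} (f : Rd d → ℂ) (ξ : Rd d) : ℂ :=
  ∫ x : Rd d, f x * Complex.exp (-(Complex.I * ((inner ℝ x ξ : ℝ) : ℂ)))

/-- Inverse Fourier transform `F⁻¹(φ)(x) = (2π)^{-d} ∫ φ(ξ) e^{i x·ξ} dξ`. -/
def invFT {d : ℕ} (f : Rd d → ℂ) (x : Rd d) : ℂ :=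
  (((2 * Real.pi) ^ d : ℝ)⁻¹ : ℂ) * ∫ ξ : Rd d, f ξ * Complex.exp (Complex.I * ((inner ℝ x ξ : ℝ) : ℂ))

def WeightSeq (Mp : ℕ → ℝ) : Prop := Mp 0 = 1 ∧ ∀ p, 0 < Mp p

def CondM1 (Mp : ℕ → ℝ) : Prop := ∀ p : ℕ, 1 ≤ p → (Mp p) ^ 2 ≤ Mp (p - 1) * Mp (p + 1)

def assocFn (Mp : ℕ → ℝ) (t : ℝ) : EReal :=
  if t ≤ 0 then 0 else ⨆ p : ℕ, ((Real.log (t ^ p / Mp p) : ℝ) : EReal)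

set_option maxHeartbeats 1600000

/-- Decay of the Fourier transform of `θ_ε(x) = ε^{-d} F⁻¹(ψ)(x/ε) χ(x/r_ε)` for
high frequencies `|ξ| ≥ 4/ε`:  `|θ̂_ε(ξ)| ≤ C' e^{-N(r_ε|ξ|/h)}` with
`C' = C (2π)^{-d} ∫ e^{-N(2|t|/h)} dt`. -/
theorem fourier_theta_highfreq_decay (d : ℕ) (Np : ℕ → ℝ) (hW : WeightSeq Np)
    (h1 : CondM1 Np) (N : ℝ → ℝ) (hN0 : N 0 = 0)
    (hN : ∀ t : ℝ, 0 < t → (N t : EReal) = assocFn Np t)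
    (χ : Rd d → ℂ) (hχint : Integrable χ)
    (ψ : Rd d → ℝ) (hψm : Measurable ψ)
    (hψ01 : ∀ x, 0 ≤ ψ x ∧ ψ x ≤ 1)
    (hψsupp : ∀ x : Rd d, ψ x ≠ 0 → ‖x‖ < 2)
    (ε r C h : ℝ) (hε : 0 < ε) (hr : 0 < r) (hC : 0 < C) (hh : 0 < h)
    (hχhat : ∀ t : Rd d, ‖FT χ t‖ ≤ C * Real.exp (-(2 * N (2 * ‖t‖ / h))))
    (θ : Rd d → ℂ)
    (hθ : ∀ x : Rd d, θ x = ((ε ^ d : ℝ)⁻¹ : ℂ) * invFT (fun y => (ψ y : ℂ)) (ε⁻¹ • x) * χ (r⁻¹ • x)) :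
    ∀ ξ : Rd d, 4 / ε ≤ ‖ξ‖ →
      ‖FT θ ξ‖ ≤ (C * ((2 * Real.pi) ^ d : ℝ)⁻¹ *
          ∫ t : Rd d, Real.exp (-(N (2 * ‖t‖ / h)))) * Real.exp (-(N (r * ‖ξ‖ / h))) := by
  obtain ⟨hM0, hMpos⟩ := hW
  -- Basic properties of N
  have hNlog : ∀ t : ℝ, 0 < t → ∀ p : ℕ, Real.log (t ^ p / Np p) ≤ N t := by
    intro t ht p
    have h1' := hN t ht
    rw [assocFn, if_neg (not_le.2 ht)] at h1'
    have h2 : ((Real.log (t ^ p / Np p) : ℝ) : EReal) ≤ ((N t : ℝ) : EReal) := by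
      rw [h1']
      exact le_iSup (fun p : ℕ => ((Real.log (t ^ p / Np p) : ℝ) : EReal)) p
    exact_mod_cast h2
  have hNnonneg : ∀ t : ℝ, 0 ≤ t → 0 ≤ N t := by
    intro t ht
    rcases eq_or_lt_of_le ht with h'|h'
    · rw [← h', hN0]
    · have := hNlog t h' 0
      simpa [hM0] using this
  have hNmono : ∀ s t : ℝ, 0 ≤ s → s ≤ t → N s ≤ N t := by
    intro s t hs hst
    rcases eq_or_lt_of_le hs with h'|h'
    · rw [← h', hN0]; exact hNnonneg t (le_trans hs hst)
    · have ht : 0 < t := lt_of_lt_of_le h' hst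
      have h1' := hN s h'
      rw [assocFn, if_neg (not_le.2 h')] at h1'
      have key : ((N s : ℝ) : EReal) ≤ ((N t : ℝ) : EReal) := by
        rw [h1']
        refine iSup_le fun p => ?_
        have hle : Real.log (s ^ p / Np p) ≤ Real.log (t ^ p / Np p) := by
          apply Real.log_le_log (div_pos (pow_pos h' p) (hMpos p))
          exact (div_le_div_iff_of_pos_right (hMpos p)).2 (pow_le_pow_left₀ h'.le hst p)
        calc ((Real.log (s ^ p / Np p) : ℝ) : EReal)
            ≤ ((Real.log (t ^ p / Np p) : ℝ) : EReal) := by exact_mod_cast hle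
          _ ≤ _ := by exact_mod_cast hNlog t ht p
      exact_mod_cast key
  have hNdecay : ∀ t : ℝ, 0 < t → Real.exp (-(N t)) ≤ Np (d+1) / t^(d+1) := by
    intro t ht
    have h1' := hNlog t ht (d+1)
    have h2 : t^(d+1) / Np (d+1) ≤ Real.exp (N t) :=
      (Real.log_le_iff_le_exp (div_pos (pow_pos ht _) (hMpos _))).1 h1'
    rw [Real.exp_neg]
    have h3 : (Real.exp (N t))⁻¹ ≤ (t^(d+1) / Np (d+1))⁻¹ :=
      inv_anti₀ (div_pos (pow_pos ht _) (hMpos _)) h2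
    rwa [inv_div] at h3
  -- `N` agrees with the measurable function `toReal ∘ assocFn` on `[0, ∞)`
  have hNtoReal : ∀ s : ℝ, 0 ≤ s → N s = (assocFn Np s).toReal := by
    intro s hs
    rcases eq_or_lt_of_le hs with h'|h'
    · rw [← h', hN0, assocFn, if_pos le_rfl]; simp
    · rw [← hN s h', EReal.toReal_coe]
  -- the majorant function F
  set F : Rd d → ℝ := fun u => Real.exp (-(N (2 * ‖u‖ / h))) with hF
  have hFmeas : Measurable F := by
    have hAF : Measurable fun s : ℝ => (assocFn Np s).toReal := by
      apply Measurable.ereal_toReal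
      unfold assocFn
      apply Measurable.ite measurableSet_Iic measurable_const
      apply Measurable.iSup; intro p
      exact (Real.measurable_log.comp ((measurable_id.pow_const p).div_const _)).coe_real_ereal
    have hFeq : F = fun u : Rd d =>
        Real.exp (-((assocFn Np (2 * ‖u‖ / h)).toReal)) := by
      funext u
      simp only [hF]
      rw [hNtoReal (2 * ‖u‖ / h) (by positivity)]
    rw [hFeq]
    exact Real.measurable_exp.comp
      ((hAF.comp ((measurable_norm.const_mul 2).div_const h)).neg)
  have hFnonneg : ∀ u, 0 ≤ F u := fun u => Real.exp_nonneg _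
  -- integrability of F
  have hFint : Integrable F := by
    set K : ℝ := 2^(d+1) * (1 + Np (d+1) * (h/2)^(d+1)) with hK
    have hKpos : 0 < K := by have := hMpos (d+1); positivity
    have hmaj : Integrable (fun u : Rd d => K * (1+‖u‖)^(-((d:ℝ)+1))) := by
      apply Integrable.const_mul
      apply integrable_one_add_norm
      rw [finrank_euclideanSpace_fin]; linarith
    apply hmaj.mono' hFmeas.aestronglyMeasurable
    filter_upwards with u
    rw [Real.norm_eq_abs, abs_of_nonneg (Real.exp_nonneg _)]
    have hrpow : (1+‖u‖)^(-((d:ℝ)+1)) = ((1+‖u‖)^(d+1))⁻¹ := by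
      have h0 : (0:ℝ) < 1 + ‖u‖ := by positivity
      rw [show -((d:ℝ)+1) = -(((d+1 : ℕ)) : ℝ) by push_cast; ring,
        Real.rpow_neg h0.le, Real.rpow_natCast]
    rw [hrpow]
    by_cases hu : ‖u‖ ≤ 1
    · have hle1 : F u ≤ 1 := by
        calc F u = Real.exp (-(N (2*‖u‖/h))) := rfl
          _ ≤ Real.exp (-0) := by
              apply Real.exp_le_exp.2
              simp only [neg_zero, neg_le, neg_zero]
              exact hNnonneg _ (by positivity)
          _ = 1 := by simp
      have h2d : (1+‖u‖)^(d+1) ≤ 2^(d+1) := by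
        apply pow_le_pow_left₀ (by positivity) (by linarith)
      have hinv : ((2:ℝ)^(d+1))⁻¹ ≤ ((1+‖u‖)^(d+1))⁻¹ :=
        inv_anti₀ (by positivity) h2d
      have hmul : K * ((2:ℝ)^(d+1))⁻¹ ≤ K * ((1+‖u‖)^(d+1))⁻¹ :=
        mul_le_mul_of_nonneg_left hinv hKpos.le
      have hKval : K * ((2:ℝ)^(d+1))⁻¹ = 1 + Np (d+1) * (h/2)^(d+1) := by
        rw [hK]; field_simp
      have hpos2 : 0 < Np (d+1) * (h/2)^(d+1) := by have := hMpos (d+1); positivity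
      calc F u ≤ 1 := hle1
        _ ≤ K * ((2:ℝ)^(d+1))⁻¹ := by rw [hKval]; linarith
        _ ≤ _ := hmul
    · push_neg at hu
      have hupos : 0 < ‖u‖ := lt_trans one_pos hu
      have hs : 0 < 2*‖u‖/h := by positivity
      have hd := hNdecay _ hs
      have key : Np (d+1) / (2*‖u‖/h)^(d+1) ≤ K * ((1+‖u‖)^(d+1))⁻¹ := by
        rw [← div_eq_mul_inv, div_le_div_iff₀ (by positivity) (by positivity)]
        have e1 : (2*‖u‖/h)^(d+1) * (h/2)^(d+1) = ‖u‖^(d+1) := by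
          rw [← mul_pow]; congr 1; field_simp
        have e2 : (1+‖u‖)^(d+1) ≤ 2^(d+1) * ‖u‖^(d+1) := by
          rw [← mul_pow]; apply pow_le_pow_left₀ (by positivity) (by linarith)
        calc Np (d+1) * (1+‖u‖)^(d+1)
            ≤ Np (d+1) * (2^(d+1) * ‖u‖^(d+1)) :=
              mul_le_mul_of_nonneg_left e2 (hMpos _).le
          _ = 2^(d+1) * (Np (d+1) * (h/2)^(d+1)) * (2*‖u‖/h)^(d+1) := by
              rw [← e1]; ring
          _ ≤ K * (2*‖u‖/h)^(d+1) := by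
              apply mul_le_mul_of_nonneg_right _ (by positivity)
              rw [hK]
              apply mul_le_mul_of_nonneg_left (by linarith) (by positivity)
      exact hd.trans key
  -- Main computation
  intro ξ hξ
  have hξpos : 0 < ‖ξ‖ := lt_of_lt_of_le (by positivity) hξ
  set ζ : Rd d → Rd d := fun η => ξ - ε⁻¹ • η with hζ
  set f : Rd d → Rd d → ℂ := fun x η =>
    (ψ η : ℂ) * χ (r⁻¹ • x) * Complex.exp (-(Complex.I * ((inner ℝ x (ζ η) : ℝ) : ℂ))) with hf
  have hexpnorm : ∀ c : ℝ, ‖Complex.exp (-(Complex.I * (c:ℂ)))‖ = 1 := by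
    intro c
    rw [Complex.norm_exp]; simp
  have hψle1 : ∀ η, ‖(ψ η : ℂ)‖ ≤ 1 := by
    intro η
    rw [Complex.norm_real, Real.norm_eq_abs, abs_le]
    exact ⟨by linarith [(hψ01 η).1], (hψ01 η).2⟩
  -- pointwise identity
  have hpoint : ∀ x η : Rd d,
      (ψ η : ℂ) * Complex.exp (Complex.I * ((inner ℝ (ε⁻¹ • x) η : ℝ) : ℂ)) *
        (χ (r⁻¹ • x) * Complex.exp (-(Complex.I * ((inner ℝ x ξ : ℝ) : ℂ)))) = f x η := by
    intro x η
    have h1 : (inner ℝ (ε⁻¹ • x) η : ℝ) = ε⁻¹ * (inner ℝ x η : ℝ) := real_inner_smul_left _ _ _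
    have h2 : (inner ℝ x (ζ η) : ℝ) = (inner ℝ x ξ : ℝ) - ε⁻¹ * (inner ℝ x η : ℝ) := by
      simp only [hζ, inner_sub_right, real_inner_smul_right]
    simp only [hf]
    rw [h1, h2, mul_mul_mul_comm]
    congr 1
    rw [← Complex.exp_add]
    congr 1
    push_cast
    ring
  have hθe : ∀ x : Rd d, θ x * Complex.exp (-(Complex.I * ((inner ℝ x ξ : ℝ) : ℂ))) =
      (((ε ^ d : ℝ)⁻¹ * ((2 * Real.pi) ^ d : ℝ)⁻¹ : ℝ) : ℂ) * ∫ η : Rd d, f x η := by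
    intro x
    rw [hθ x, invFT]
    beta_reduce
    rw [show (∫ η : Rd d, f x η) =
        (∫ η : Rd d, (ψ η : ℂ) * Complex.exp (Complex.I * ((inner ℝ (ε⁻¹ • x) η : ℝ) : ℂ))) *
          (χ (r⁻¹ • x) * Complex.exp (-(Complex.I * ((inner ℝ x ξ : ℝ) : ℂ)))) from by
      rw [← integral_mul_const]
      exact integral_congr_ae (ae_of_all _ fun η => (hpoint x η).symm)]
    push_cast
    ring
  -- integrability on the product space
  have hχr : Integrable (fun x : Rd d => χ (r⁻¹ • x)) := hχint.comp_smul (inv_ne_zero hr.ne')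
  have hψint : Integrable ψ := by
    have hind : Integrable ((Metric.closedBall (0:Rd d) 2).indicator (fun _ => (1:ℝ))) := by
      rw [integrable_indicator_iff measurableSet_closedBall]
      exact integrableOn_const measure_closedBall_lt_top.ne
    refine hind.mono' hψm.aestronglyMeasurable ?_
    filter_upwards with x
    by_cases hx : ψ x = 0
    · rw [hx]
      simp only [norm_zero]
      exact Set.indicator_nonneg (fun _ _ => by norm_num) _
    · have hx2 := hψsupp x hx
      rw [Set.indicator_of_mem (by simpa [Metric.mem_closedBall, dist_zero_right] using hx2.le)]
      rw [Real.norm_eq_abs, abs_le]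
      exact ⟨by linarith [(hψ01 x).1], (hψ01 x).2⟩
  have hnormf : ∀ x η : Rd d, ‖f x η‖ = ‖χ (r⁻¹ • x)‖ * |ψ η| := by
    intro x η
    simp only [hf]
    rw [norm_mul, norm_mul, hexpnorm, Complex.norm_real, Real.norm_eq_abs]
    ring
  have hmaj2 : Integrable (fun z : Rd d × Rd d => ‖χ (r⁻¹ • z.1)‖ * |ψ z.2|)
      (volume.prod volume) := hχr.norm.mul_prod hψint.abs
  have hasm : AEStronglyMeasurable (fun z : Rd d × Rd d => f z.1 z.2) (volume.prod volume) := by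
    simp only [hf]
    apply AEStronglyMeasurable.mul
    apply AEStronglyMeasurable.mul
    · exact ((Complex.measurable_ofReal.comp hψm).comp measurable_snd).aestronglyMeasurable
    · exact hχr.1.comp_fst
    · apply Continuous.aestronglyMeasurable
      apply Complex.continuous_exp.comp
      apply Continuous.neg
      apply Continuous.mul continuous_const
      apply Complex.continuous_ofReal.comp
      simp only [hζ]
      exact Continuous.inner continuous_fst (continuous_const.sub (continuous_snd.const_smul ε⁻¹))
  have hprodint : Integrable (fun z : Rd d × Rd d => f z.1 z.2) (volume.prod volume) := by
    refine hmaj2.mono' hasm ?_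
    filter_upwards with z
    rw [hnormf z.1 z.2]
  -- Fubini
  have hswap : (∫ x : Rd d, ∫ η : Rd d, f x η) = ∫ η : Rd d, ∫ x : Rd d, f x η :=
    integral_integral_swap hprodint
  -- inner integral computation
  have hinner : ∀ η : Rd d, (∫ x : Rd d, f x η) =
      (ψ η : ℂ) * (((r ^ d : ℝ)) : ℂ) * FT χ (r • ζ η) := by
    intro η
    have hpt : ∀ x : Rd d, f x η =
        (ψ η : ℂ) * (χ (r⁻¹ • x) *
          Complex.exp (-(Complex.I * ((inner ℝ (r⁻¹ • x) (r • ζ η) : ℝ) : ℂ)))) := by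
      intro x
      simp only [hf]
      have hin : (inner ℝ (r⁻¹ • x) (r • ζ η) : ℝ) = (inner ℝ x (ζ η) : ℝ) := by
        rw [real_inner_smul_left, real_inner_smul_right, ← mul_assoc,
          inv_mul_cancel₀ hr.ne', one_mul]
      rw [hin]
      ring
    rw [integral_congr_ae (ae_of_all _ hpt), integral_const_mul]
    have h3' := MeasureTheory.Measure.integral_comp_inv_smul volume
      (fun y : Rd d => χ y * Complex.exp (-(Complex.I * ((inner ℝ y (r • ζ η) : ℝ) : ℂ)))) r
    beta_reduce at h3'
    rw [h3', finrank_euclideanSpace_fin, abs_of_pos (pow_pos hr d), FT, Complex.real_smul]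
    push_cast
    ring
  -- formula for FT θ ξ
  have hFTform : FT θ ξ = (((ε ^ d : ℝ)⁻¹ * ((2 * Real.pi) ^ d : ℝ)⁻¹ : ℝ) : ℂ) *
      ∫ η : Rd d, (ψ η : ℂ) * (((r ^ d : ℝ)) : ℂ) * FT χ (r • ζ η) := by
    rw [FT]
    calc (∫ x : Rd d, θ x * Complex.exp (-(Complex.I * ((inner ℝ x ξ : ℝ) : ℂ))))
        = ∫ x : Rd d, (((ε ^ d : ℝ)⁻¹ * ((2 * Real.pi) ^ d : ℝ)⁻¹ : ℝ) : ℂ) *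
            ∫ η : Rd d, f x η := integral_congr_ae (ae_of_all _ hθe)
      _ = (((ε ^ d : ℝ)⁻¹ * ((2 * Real.pi) ^ d : ℝ)⁻¹ : ℝ) : ℂ) *
            ∫ x : Rd d, ∫ η : Rd d, f x η := integral_const_mul _ _
      _ = (((ε ^ d : ℝ)⁻¹ * ((2 * Real.pi) ^ d : ℝ)⁻¹ : ℝ) : ℂ) *
            ∫ η : Rd d, ∫ x : Rd d, f x η := by rw [hswap]
      _ = _ := by
          congr 1
          exact integral_congr_ae (ae_of_all _ hinner)
  -- the pointwise bound
  set b : Rd d → ℝ := fun η =>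
    (C * r ^ d * Real.exp (-(N (r * ‖ξ‖ / h)))) * F (r • ζ η) with hb
  have hbnonneg : ∀ η, 0 ≤ b η := by
    intro η
    simp only [hb]
    exact mul_nonneg (by positivity) (hFnonneg _)
  have hbound : ∀ η : Rd d, ‖(ψ η : ℂ) * (((r ^ d : ℝ)) : ℂ) * FT χ (r • ζ η)‖ ≤ b η := by
    intro η
    by_cases hη : ψ η = 0
    · rw [hη]
      simp only [Complex.ofReal_zero, zero_mul, norm_zero]
      exact hbnonneg η
    · have hη2 : ‖η‖ < 2 := hψsupp η hη
      have hζnorm : ‖ξ‖ ≤ 2 * ‖ζ η‖ := by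
        have hsm : ‖ε⁻¹ • η‖ ≤ ‖ξ‖ / 2 := by
          rw [norm_smul, Real.norm_eq_abs, abs_of_pos (inv_pos.2 hε)]
          calc ε⁻¹ * ‖η‖ ≤ ε⁻¹ * 2 :=
                mul_le_mul_of_nonneg_left hη2.le (inv_pos.2 hε).le
            _ = (4 / ε) / 2 := by field_simp; ring
            _ ≤ ‖ξ‖ / 2 := by linarith
        have h2' : ‖ξ‖ - ‖ε⁻¹ • η‖ ≤ ‖ζ η‖ := by
          simp only [hζ]
          exact norm_sub_norm_le _ _
        linarith
      have hargle : r * ‖ξ‖ / h ≤ 2 * ‖r • ζ η‖ / h := by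
        rw [norm_smul, Real.norm_eq_abs, abs_of_pos hr]
        have hnum : r * ‖ξ‖ ≤ 2 * (r * ‖ζ η‖) := by nlinarith
        exact (div_le_div_iff_of_pos_right hh).2 hnum
      have hNle : N (r * ‖ξ‖ / h) ≤ N (2 * ‖r • ζ η‖ / h) :=
        hNmono _ _ (by positivity) hargle
      have hw := hχhat (r • ζ η)
      have hsplit : C * Real.exp (-(2 * N (2 * ‖r • ζ η‖ / h))) ≤
          C * (F (r • ζ η) * Real.exp (-(N (r * ‖ξ‖ / h)))) := by
        apply mul_le_mul_of_nonneg_left _ hC.le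
        have hFv : F (r • ζ η) = Real.exp (-(N (2 * ‖r • ζ η‖ / h))) := rfl
        rw [hFv, ← Real.exp_add]
        apply Real.exp_le_exp.2
        linarith
      have hrdnorm : ‖(((r ^ d : ℝ)) : ℂ)‖ = r ^ d := by
        rw [Complex.norm_real, Real.norm_eq_abs, abs_of_pos (pow_pos hr d)]
      calc ‖(ψ η : ℂ) * (((r ^ d : ℝ)) : ℂ) * FT χ (r • ζ η)‖
          = ‖(ψ η : ℂ)‖ * ‖(((r ^ d : ℝ)) : ℂ)‖ * ‖FT χ (r • ζ η)‖ := by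
            rw [norm_mul, norm_mul]
        _ ≤ 1 * (r ^ d) * (C * (F (r • ζ η) * Real.exp (-(N (r * ‖ξ‖ / h))))) := by
            rw [hrdnorm]
            gcongr
            · exact hψle1 η
            · exact hw.trans hsplit
        _ = b η := by simp only [hb]; ring
  -- integrability of the majorant b
  have hbint : Integrable b := by
    have hG1 : Integrable (fun u : Rd d => F (r • u)) := hFint.comp_smul hr.ne'
    have hG2 : Integrable (fun u : Rd d => F (r • (ξ - u))) := hG1.comp_sub_left ξ
    have hG3 : Integrable (fun η : Rd d => F (r • (ξ - ε⁻¹ • η))) :=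
      hG2.comp_smul (inv_ne_zero hε.ne')
    have hG3' : Integrable (fun η : Rd d => F (r • ζ η)) := by
      simp only [hζ]; exact hG3
    rw [hb]
    exact hG3'.const_mul _
  -- norm inequality
  have hnormle : ‖FT θ ξ‖ ≤ ((ε ^ d)⁻¹ * ((2 * Real.pi) ^ d)⁻¹) * ∫ η : Rd d, b η := by
    rw [hFTform, norm_mul]
    have hcn : ‖(((ε ^ d : ℝ)⁻¹ * ((2 * Real.pi) ^ d : ℝ)⁻¹ : ℝ) : ℂ)‖ =
        (ε ^ d)⁻¹ * ((2 * Real.pi) ^ d)⁻¹ := by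
      rw [Complex.norm_real, Real.norm_eq_abs, abs_of_pos (by positivity)]
    rw [hcn]
    apply mul_le_mul_of_nonneg_left _ (by positivity)
    calc ‖∫ η : Rd d, (ψ η : ℂ) * (((r ^ d : ℝ)) : ℂ) * FT χ (r • ζ η)‖
        ≤ ∫ η : Rd d, ‖(ψ η : ℂ) * (((r ^ d : ℝ)) : ℂ) * FT χ (r • ζ η)‖ :=
          norm_integral_le_integral_norm _
      _ ≤ ∫ η : Rd d, b η :=
          integral_mono_of_nonneg (ae_of_all _ fun η => norm_nonneg _) hbint
            (ae_of_all _ hbound)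
  -- value of ∫ b
  have hIb : ∫ η : Rd d, b η =
      (C * r ^ d * Real.exp (-(N (r * ‖ξ‖ / h)))) * (ε ^ d * ((r ^ d)⁻¹ * ∫ t : Rd d, F t)) := by
    rw [hb, integral_const_mul]
    congr 1
    have e1 := MeasureTheory.Measure.integral_comp_smul volume
      (fun u : Rd d => F (r • (ξ - u))) ε⁻¹
    beta_reduce at e1
    have e2 : (∫ u : Rd d, F (r • (ξ - u))) = ∫ u : Rd d, F (r • u) :=
      integral_sub_left_eq_self (fun u : Rd d => F (r • u)) volume ξ
    have e3 := MeasureTheory.Measure.integral_comp_smul volume F r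
    calc (∫ η : Rd d, F (r • ζ η)) = ∫ η : Rd d, F (r • (ξ - ε⁻¹ • η)) := by simp only [hζ]
      _ = |((ε⁻¹ : ℝ) ^ Module.finrank ℝ (Rd d))⁻¹| • ∫ u : Rd d, F (r • (ξ - u)) := e1
      _ = ε ^ d * ∫ u : Rd d, F (r • u) := by
          rw [e2, finrank_euclideanSpace_fin, smul_eq_mul]
          congr 1
          rw [inv_pow, inv_inv, abs_of_pos (pow_pos hε d)]
      _ = ε ^ d * (|((r : ℝ) ^ Module.finrank ℝ (Rd d))⁻¹| • ∫ t : Rd d, F t) := by rw [e3]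
      _ = ε ^ d * ((r ^ d)⁻¹ * ∫ t : Rd d, F t) := by
          rw [finrank_euclideanSpace_fin, smul_eq_mul, abs_of_pos (by positivity)]
  -- conclusion
  have hεd : (ε ^ d : ℝ) ≠ 0 := by positivity
  have hrd : (r ^ d : ℝ) ≠ 0 := by positivity
  have hπd : ((2 * Real.pi) ^ d : ℝ) ≠ 0 := by positivity
  calc ‖FT θ ξ‖ ≤ ((ε ^ d)⁻¹ * ((2 * Real.pi) ^ d)⁻¹) * ∫ η : Rd d, b η := hnormle
    _ = (C * ((2 * Real.pi) ^ d : ℝ)⁻¹ * ∫ t : Rd d, F t) * Real.exp (-(N (r * ‖ξ‖ / h))) := by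
        rw [hIb]
        field_simp
    _ = _ := rfl

end
end

section
/- Let (E,F) be a test pair and T ∈ L(E,E) a continuous linear operator with T|_F ∈ L(F,F). Then the map T^RO : L(E,F) → L(E,F), Φ ↦ T∘Φ − Φ∘T is linear and continuous, and the map T̂ : E(E,F) → E(E,F) defined by (T̂R)(Φ) = T(R(Φ)) − dR(Φ)(T^RO Φ) satisfies T̂ ∘ ι = ι ∘ T and T̂ ∘ σ = σ ∘ (T|_F), where ι(u)(Φ) = Φ(u) and σ(φ)(Φ) = φ. -/
open Filter Set

noncomputable section

variable {E F : Type*}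
  [AddCommGroup E] [Module ℝ E] [TopologicalSpace E]
  [AddCommGroup F] [Module ℝ F] [UniformSpace F] [IsUniformAddGroup F]
  [ContinuousSMul ℝ F] [T2Space F]

abbrev Basic (E F : Type*) [AddCommGroup E] [Module ℝ E] [TopologicalSpace E]
    [AddCommGroup F] [Module ℝ F] [TopologicalSpace F] : Type _ :=
  (E →L[ℝ] F) → F

def iotaMap : E → Basic E F := fun u Φ => Φ u

def sigmaMap : F → Basic E F := fun φ _ => φ

/-- The directional (Gateaux) derivative `dR(Φ)(Ψ)` of a map on `L(E,F)`,
in the sense of convenient calculus. -/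
def dirDeriv (R : Basic E F) (Φ Ψ : E →L[ℝ] F) : F :=
  letI : Nonempty F := ⟨0⟩
  limUnder (nhdsWithin (0 : ℝ) {(0 : ℝ)}ᶜ)
    (fun t : ℝ => t⁻¹ • (R (Φ + t • Ψ) - R Φ))

/-- `T^RO Φ = T∘Φ − Φ∘T` (with `Tf = T|_F`). -/
def TRO (T : E →L[ℝ] E) (Tf : F →L[ℝ] F) : (E →L[ℝ] F) → (E →L[ℝ] F) :=
  fun Φ => Tf.comp Φ - Φ.comp T

/-- `(T̂ R)(Φ) = T(R(Φ)) − dR(Φ)(T^RO Φ)`. -/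
def hatT (T : E →L[ℝ] E) (Tf : F →L[ℝ] F) (R : Basic E F) : Basic E F :=
  fun Φ => Tf (R Φ) - dirDeriv R Φ (TRO T Tf Φ)

lemma dirDeriv_iota {E F : Type*}
    [AddCommGroup E] [Module ℝ E] [TopologicalSpace E]
    [AddCommGroup F] [Module ℝ F] [UniformSpace F] [IsUniformAddGroup F]
    [ContinuousSMul ℝ F] [T2Space F] (u : E) (Φ Ψ : E →L[ℝ] F) :
    dirDeriv (iotaMap u) Φ Ψ = Ψ u := by
  letI : Nonempty F := ⟨0⟩
  unfold dirDeriv iotaMap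
  have h : Tendsto (fun t : ℝ => t⁻¹ • ((Φ + t • Ψ) u - Φ u))
      (nhdsWithin (0 : ℝ) {(0 : ℝ)}ᶜ) (nhds (Ψ u)) := by
    have heq : ∀ t ∈ ({(0 : ℝ)}ᶜ : Set ℝ),
        t⁻¹ • ((Φ + t • Ψ) u - Φ u) = Ψ u := by
      intro t ht
      simp only [ContinuousLinearMap.add_apply, ContinuousLinearMap.smul_apply,
        add_sub_cancel_left, smul_smul, inv_mul_cancel₀ (by simpa using ht), one_smul]
    exact tendsto_const_nhds.congr' (by
      filter_upwards [self_mem_nhdsWithin] with t ht using (heq t ht).symm)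
  exact h.limUnder_eq

lemma dirDeriv_sigma {E F : Type*}
    [AddCommGroup E] [Module ℝ E] [TopologicalSpace E]
    [AddCommGroup F] [Module ℝ F] [UniformSpace F] [IsUniformAddGroup F]
    [ContinuousSMul ℝ F] [T2Space F] (φ : F) (Φ Ψ : E →L[ℝ] F) :
    dirDeriv (sigmaMap (E := E) φ) Φ Ψ = 0 := by
  letI : Nonempty F := ⟨0⟩
  unfold dirDeriv sigmaMap
  have h : Tendsto (fun t : ℝ => t⁻¹ • ((φ : F) - φ))
      (nhdsWithin (0 : ℝ) {(0 : ℝ)}ᶜ) (nhds (0 : F)) := by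
    simp only [sub_self, smul_zero]
    exact tendsto_const_nhds
  exact h.limUnder_eq

/-- For `T ∈ L(E,E)` restricting to `Tf = T|_F ∈ L(F,F)`: the map `T^RO` is linear
and continuous (bounded convergence topologies), and `T̂` satisfies `T̂ ∘ ι = ι ∘ T`
and `T̂ ∘ σ = σ ∘ T|_F` on the basic space. -/
theorem hatT_commutes (j : F →L[ℝ] E) (hj : Function.Injective j)
    (T : E →L[ℝ] E) (Tf : F →L[ℝ] F) (hcompat : ∀ φ : F, j (Tf φ) = T (j φ)) :
    IsLinearMap ℝ (TRO (F := F) T Tf) ∧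
    Continuous (TRO (F := F) T Tf) ∧
    (∀ (u : E) (Φ : E →L[ℝ] F), hatT T Tf (iotaMap u) Φ = iotaMap (T u) Φ) ∧
    (∀ (φ : F) (Φ : E →L[ℝ] F), hatT T Tf (sigmaMap (E := E) φ) Φ = sigmaMap (Tf φ) Φ) := by
  refine ⟨⟨?_, ?_⟩, ?_, ?_, ?_⟩
  · intro Φ Ψ
    unfold TRO
    ext x
    simp [map_add]
    abel
  · intro c Φ
    unfold TRO
    ext x
    simp [smul_sub]
  · have : TRO (F := F) T Tf = fun Φ =>
        ContinuousLinearMap.postcomp E Tf Φ - ContinuousLinearMap.precomp F T Φ := by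
      ext Φ x; simp [TRO]
    rw [this]
    exact ((ContinuousLinearMap.postcomp E Tf).continuous.sub
      (ContinuousLinearMap.precomp F T).continuous)
  · intro u Φ
    simp only [hatT, dirDeriv_iota, iotaMap, TRO]
    simp
  · intro φ Φ
    simp only [hatT, dirDeriv_sigma, sigmaMap]
    simp

end
end
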